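/- arXiv:1106.2486 — 9 statements merged into one kernel-verified Lean document; each statement's English description precedes it below -/
import Mathlib

section
/- If A₀, A₁, B₀, B₁ are self-adjoint operators on Hilbert spaces H_A and H_B respectively, each squaring to the identity, and 𝓑 = A₀⊗B₀ + A₀⊗B₁ + A₁⊗B₀ − A₁⊗B₁, then 𝓑² = 4·𝟙 − [A₀,A₁]⊗[B₀,B₁]. -/
open scoped TensorProduct

section Aux

variable {HA HB : Type*}
    [NormedAddCommGroup HA] [InnerProductSpace ℂ HA]
    [NormedAddCommGroup HB] [InnerProductSpace ℂ HB]

lemma tp_map_mul (f f' : HA →ₗ[ℂ] HA) (g g' : HB →ₗ[ℂ] HB) :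
    TensorProduct.map f g * TensorProduct.map f' g'
      = TensorProduct.map (f * f') (g * g') := by
  ext x y
  simp [Module.End.mul_apply]

lemma tp_map_sub_left (f f' : HA →ₗ[ℂ] HA) (g : HB →ₗ[ℂ] HB) :
    TensorProduct.map (f - f') g = TensorProduct.map f g - TensorProduct.map f' g := by
  ext x y
  simp [TensorProduct.sub_tmul]

lemma tp_map_sub_right (f : HA →ₗ[ℂ] HA) (g g' : HB →ₗ[ℂ] HB) :
    TensorProduct.map f (g - g') = TensorProduct.map f g - TensorProduct.map f g' := by
  ext x y
  simp [TensorProduct.tmul_sub]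

end Aux

/-- Khalfin–Tsirelson–Landau identity: if `A₀, A₁, B₀, B₁` are self-adjoint
operators squaring to the identity, then the CHSH operator
`𝓑 = A₀⊗B₀ + A₀⊗B₁ + A₁⊗B₀ − A₁⊗B₁` satisfies
`𝓑² = 4·𝟙 − [A₀,A₁]⊗[B₀,B₁]`. -/
theorem chsh_square_identity
    {HA HB : Type*}
    [NormedAddCommGroup HA] [InnerProductSpace ℂ HA] [CompleteSpace HA]
    [NormedAddCommGroup HB] [InnerProductSpace ℂ HB] [CompleteSpace HB]
    (A₀ A₁ : HA →L[ℂ] HA) (B₀ B₁ : HB →L[ℂ] HB)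
    (hA₀ : IsSelfAdjoint A₀) (hA₁ : IsSelfAdjoint A₁)
    (hB₀ : IsSelfAdjoint B₀) (hB₁ : IsSelfAdjoint B₁)
    (hA₀sq : A₀ * A₀ = 1) (hA₁sq : A₁ * A₁ = 1)
    (hB₀sq : B₀ * B₀ = 1) (hB₁sq : B₁ * B₁ = 1)
    (𝓑 : HA ⊗[ℂ] HB →ₗ[ℂ] HA ⊗[ℂ] HB)
    (h𝓑 : 𝓑 = TensorProduct.map (A₀ : HA →ₗ[ℂ] HA) (B₀ : HB →ₗ[ℂ] HB)
            + TensorProduct.map (A₀ : HA →ₗ[ℂ] HA) (B₁ : HB →ₗ[ℂ] HB)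
            + TensorProduct.map (A₁ : HA →ₗ[ℂ] HA) (B₀ : HB →ₗ[ℂ] HB)
            - TensorProduct.map (A₁ : HA →ₗ[ℂ] HA) (B₁ : HB →ₗ[ℂ] HB)) :
    𝓑 * 𝓑 = (4 : ℂ) • (1 : HA ⊗[ℂ] HB →ₗ[ℂ] HA ⊗[ℂ] HB)
      - TensorProduct.map
          ((A₀ * A₁ - A₁ * A₀ : HA →L[ℂ] HA) : HA →ₗ[ℂ] HA)
          ((B₀ * B₁ - B₁ * B₀ : HB →L[ℂ] HB) : HB →ₗ[ℂ] HB) := by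
  set a₀ := (A₀ : HA →ₗ[ℂ] HA)
  set a₁ := (A₁ : HA →ₗ[ℂ] HA)
  set b₀ := (B₀ : HB →ₗ[ℂ] HB)
  set b₁ := (B₁ : HB →ₗ[ℂ] HB)
  have ha₀ : a₀ * a₀ = 1 := by
    ext x
    simpa [a₀] using DFunLike.congr_fun hA₀sq x
  have ha₁ : a₁ * a₁ = 1 := by
    ext x
    simpa [a₁] using DFunLike.congr_fun hA₁sq x
  have hb₀ : b₀ * b₀ = 1 := by
    ext x
    simpa [b₀] using DFunLike.congr_fun hB₀sq x
  have hb₁ : b₁ * b₁ = 1 := by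
    ext x
    simpa [b₁] using DFunLike.congr_fun hB₁sq x
  have hcoA : ((A₀ * A₁ - A₁ * A₀ : HA →L[ℂ] HA) : HA →ₗ[ℂ] HA) = a₀ * a₁ - a₁ * a₀ := rfl
  have hcoB : ((B₀ * B₁ - B₁ * B₀ : HB →L[ℂ] HB) : HB →ₗ[ℂ] HB) = b₀ * b₁ - b₁ * b₀ := rfl
  rw [h𝓑, hcoA, hcoB]
  simp only [add_mul, mul_add, sub_mul, mul_sub, tp_map_mul,
    tp_map_sub_left, tp_map_sub_right, ha₀, ha₁, hb₀, hb₁,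
    TensorProduct.map_one]
  have h4 : (4 : ℂ) • (1 : HA ⊗[ℂ] HB →ₗ[ℂ] HA ⊗[ℂ] HB) = 1 + 1 + 1 + 1 := by
    rw [show (4 : ℂ) = 1 + 1 + 1 + 1 by norm_num]
    simp [add_smul]
  rw [h4]
  abel
end

section
/- If A₀, A₁, B₀, B₁ are self-adjoint involutions on Hilbert spaces H_A, H_B, then the operator norm of the CHSH operator 𝓑 = A₀⊗B₀ + A₀⊗B₁ + A₁⊗B₀ − A₁⊗B₁ satisfies ‖𝓑‖ ≤ 2√2 (Tsirelson's bound). -/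
/-- Tsirelson's bound: for self-adjoint involutions `A₀, A₁` on `H_A` and `B₀, B₁` on
`H_B` (represented as commuting operators on the joint Hilbert space, `A_i ⊗ B_j`
corresponding to the product `A_i * B_j`), the CHSH operator
`𝓑 = A₀⊗B₀ + A₀⊗B₁ + A₁⊗B₀ − A₁⊗B₁` satisfies `‖𝓑‖ ≤ 2√2`. -/
theorem tsirelson_bound
    {H : Type*} [NormedAddCommGroup H] [InnerProductSpace ℂ H] [CompleteSpace H]
    (A₀ A₁ B₀ B₁ : H →L[ℂ] H)
    (hA₀ : IsSelfAdjoint A₀) (hA₁ : IsSelfAdjoint A₁)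
    (hB₀ : IsSelfAdjoint B₀) (hB₁ : IsSelfAdjoint B₁)
    (hA₀sq : A₀ * A₀ = 1) (hA₁sq : A₁ * A₁ = 1)
    (hB₀sq : B₀ * B₀ = 1) (hB₁sq : B₁ * B₁ = 1)
    (hc₀₀ : Commute A₀ B₀) (hc₀₁ : Commute A₀ B₁)
    (hc₁₀ : Commute A₁ B₀) (hc₁₁ : Commute A₁ B₁) :
    ‖A₀ * B₀ + A₀ * B₁ + A₁ * B₀ - A₁ * B₁‖ ≤ 2 * Real.sqrt 2 := by
  set T : H →L[ℂ] H := A₀ * B₀ + A₀ * B₁ + A₁ * B₀ - A₁ * B₁ with hT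
  -- T is self-adjoint
  have sa : ∀ X Y : H →L[ℂ] H, IsSelfAdjoint X → IsSelfAdjoint Y → Commute X Y →
      IsSelfAdjoint (X * Y) := by
    intro X Y hX hY hXY
    rw [IsSelfAdjoint, star_mul, hX.star_eq, hY.star_eq, ← hXY.eq]
  have hTsa : IsSelfAdjoint T := by
    have h00 := sa A₀ B₀ hA₀ hB₀ hc₀₀
    have h01 := sa A₀ B₁ hA₀ hB₁ hc₀₁
    have h10 := sa A₁ B₀ hA₁ hB₀ hc₁₀
    have h11 := sa A₁ B₁ hA₁ hB₁ hc₁₁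
    exact ((h00.add h01).add h10).sub h11
  -- key algebraic identity: T² = 4·𝟙 − [A₀, A₁][B₀, B₁]
  have key : T * T = 4 • (1 : H →L[ℂ] H) - (A₀ * A₁ - A₁ * A₀) * (B₀ * B₁ - B₁ * B₀) := by
    have e₀₀ : ∀ x : H →L[ℂ] H, B₀ * (A₀ * x) = A₀ * (B₀ * x) := fun x => by
      rw [← mul_assoc, ← hc₀₀.eq, mul_assoc]
    have e₀₁ : ∀ x : H →L[ℂ] H, B₁ * (A₀ * x) = A₀ * (B₁ * x) := fun x => by
      rw [← mul_assoc, ← hc₀₁.eq, mul_assoc]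
    have e₁₀ : ∀ x : H →L[ℂ] H, B₀ * (A₁ * x) = A₁ * (B₀ * x) := fun x => by
      rw [← mul_assoc, ← hc₁₀.eq, mul_assoc]
    have e₁₁ : ∀ x : H →L[ℂ] H, B₁ * (A₁ * x) = A₁ * (B₁ * x) := fun x => by
      rw [← mul_assoc, ← hc₁₁.eq, mul_assoc]
    have sA₀ : ∀ x : H →L[ℂ] H, A₀ * (A₀ * x) = x := fun x => by
      rw [← mul_assoc, hA₀sq, one_mul]
    have sA₁ : ∀ x : H →L[ℂ] H, A₁ * (A₁ * x) = x := fun x => by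
      rw [← mul_assoc, hA₁sq, one_mul]
    have sB₀ : ∀ x : H →L[ℂ] H, B₀ * (B₀ * x) = x := fun x => by
      rw [← mul_assoc, hB₀sq, one_mul]
    have sB₁ : ∀ x : H →L[ℂ] H, B₁ * (B₁ * x) = x := fun x => by
      rw [← mul_assoc, hB₁sq, one_mul]
    rw [hT]
    simp only [mul_add, add_mul, mul_sub, sub_mul, mul_assoc, e₀₀, e₀₁, e₁₀, e₁₁,
      sA₀, sA₁, sB₀, sB₁, hA₀sq, hA₁sq, hB₀sq, hB₁sq, mul_one, one_mul]
    abel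
  -- norms of the involutions are at most 1
  have normle : ∀ X : H →L[ℂ] H, IsSelfAdjoint X → X * X = 1 → ‖X‖ ≤ 1 := by
    intro X hX hXsq
    have h1 : ‖X‖ * ‖X‖ = ‖star X * X‖ := (CStarRing.norm_star_mul_self).symm
    rw [hX.star_eq, hXsq] at h1
    have h2 : ‖(1 : H →L[ℂ] H)‖ ≤ 1 := ContinuousLinearMap.norm_id_le
    nlinarith [norm_nonneg X]
  have hnA₀ := normle A₀ hA₀ hA₀sq
  have hnA₁ := normle A₁ hA₁ hA₁sq
  have hnB₀ := normle B₀ hB₀ hB₀sq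
  have hnB₁ := normle B₁ hB₁ hB₁sq
  -- bound on the commutators
  have hCA : ‖A₀ * A₁ - A₁ * A₀‖ ≤ 2 := by
    calc ‖A₀ * A₁ - A₁ * A₀‖ ≤ ‖A₀ * A₁‖ + ‖A₁ * A₀‖ := norm_sub_le _ _
      _ ≤ ‖A₀‖ * ‖A₁‖ + ‖A₁‖ * ‖A₀‖ := by
          gcongr <;> exact norm_mul_le _ _
      _ ≤ 1 * 1 + 1 * 1 := by gcongr
      _ = 2 := by norm_num
  have hCB : ‖B₀ * B₁ - B₁ * B₀‖ ≤ 2 := by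
    calc ‖B₀ * B₁ - B₁ * B₀‖ ≤ ‖B₀ * B₁‖ + ‖B₁ * B₀‖ := norm_sub_le _ _
      _ ≤ ‖B₀‖ * ‖B₁‖ + ‖B₁‖ * ‖B₀‖ := by
          gcongr <;> exact norm_mul_le _ _
      _ ≤ 1 * 1 + 1 * 1 := by gcongr
      _ = 2 := by norm_num
  -- bound ‖T²‖ ≤ 8
  have hT2 : ‖T * T‖ ≤ 8 := by
    rw [key]
    have h1 : ‖4 • (1 : H →L[ℂ] H)‖ ≤ 4 := by
      calc ‖(4 : ℕ) • (1 : H →L[ℂ] H)‖ ≤ (4 : ℕ) * ‖(1 : H →L[ℂ] H)‖ := norm_nsmul_le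
        _ ≤ 4 * 1 := by
            have h : ‖(1 : H →L[ℂ] H)‖ ≤ 1 := ContinuousLinearMap.norm_id_le
            push_cast
            linarith
        _ = 4 := by norm_num
    have h2 : ‖(A₀ * A₁ - A₁ * A₀) * (B₀ * B₁ - B₁ * B₀)‖ ≤ 4 := by
      calc ‖(A₀ * A₁ - A₁ * A₀) * (B₀ * B₁ - B₁ * B₀)‖
          ≤ ‖A₀ * A₁ - A₁ * A₀‖ * ‖B₀ * B₁ - B₁ * B₀‖ := norm_mul_le _ _
        _ ≤ 2 * 2 := by
            apply mul_le_mul hCA hCB (norm_nonneg _) (by norm_num)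
        _ = 4 := by norm_num
    calc ‖4 • (1 : H →L[ℂ] H) - (A₀ * A₁ - A₁ * A₀) * (B₀ * B₁ - B₁ * B₀)‖
        ≤ ‖4 • (1 : H →L[ℂ] H)‖ + ‖(A₀ * A₁ - A₁ * A₀) * (B₀ * B₁ - B₁ * B₀)‖ :=
          norm_sub_le _ _
      _ ≤ 4 + 4 := add_le_add h1 h2
      _ = 8 := by norm_num
  -- conclude via the C*-identity
  have hC : ‖T‖ * ‖T‖ ≤ 8 := by
    have := CStarRing.norm_star_mul_self (x := T)
    rw [hTsa.star_eq] at this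
    linarith
  have h8 : (2 * Real.sqrt 2) * (2 * Real.sqrt 2) = 8 := by
    have : Real.sqrt 2 * Real.sqrt 2 = 2 := Real.mul_self_sqrt (by norm_num)
    nlinarith
  nlinarith [norm_nonneg T, Real.sqrt_nonneg 2]
end

section
/- Let |ψ⟩ be a unit vector in H_A ⊗ H_B and A₀, A₁, B₀, B₁ self-adjoint involutions. If ⟨ψ| A₀⊗B₀ |ψ⟩ = 1, then |⟨ψ| 𝓑 |ψ⟩| ≤ 5/2, where 𝓑 = A₀⊗B₀ + A₀⊗B₁ + A₁⊗B₀ − A₁⊗B₁. -/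
open scoped InnerProductSpace

/-- If `⟨ψ| A₀⊗B₀ |ψ⟩ = 1` for a unit vector `ψ` and self-adjoint involutions
`A₀, A₁, B₀, B₁` (represented as commuting operators on the joint Hilbert space,
`A_i ⊗ B_j` corresponding to `A_i * B_j`), then `|⟨ψ| 𝓑 |ψ⟩| ≤ 5/2`. -/
theorem chsh_bound_of_perfect_correlation
    {H : Type*} [NormedAddCommGroup H] [InnerProductSpace ℂ H] [CompleteSpace H]
    (A₀ A₁ B₀ B₁ : H →L[ℂ] H)
    (hA₀ : IsSelfAdjoint A₀) (hA₁ : IsSelfAdjoint A₁)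
    (hB₀ : IsSelfAdjoint B₀) (hB₁ : IsSelfAdjoint B₁)
    (hA₀sq : A₀ * A₀ = 1) (hA₁sq : A₁ * A₁ = 1)
    (hB₀sq : B₀ * B₀ = 1) (hB₁sq : B₁ * B₁ = 1)
    (hc₀₀ : Commute A₀ B₀) (hc₀₁ : Commute A₀ B₁)
    (hc₁₀ : Commute A₁ B₀) (hc₁₁ : Commute A₁ B₁)
    (ψ : H) (hψ : ‖ψ‖ = 1)
    (hcorr : ⟪ψ, (A₀ * B₀) ψ⟫_ℂ = 1) :
    ‖⟪ψ, (A₀ * B₀ + A₀ * B₁ + A₁ * B₀ - A₁ * B₁) ψ⟫_ℂ‖ ≤ 5 / 2 := by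
  have sym : ∀ (X : H →L[ℂ] H), IsSelfAdjoint X → ∀ u v : H,
      ⟪X u, v⟫_ℂ = ⟪u, X v⟫_ℂ := by
    intro X hX u v
    conv_lhs => rw [← hX.adjoint_eq]
    rw [ContinuousLinearMap.adjoint_inner_left]
  -- norm preservation
  have npres : ∀ (X : H →L[ℂ] H), IsSelfAdjoint X → X * X = 1 → ‖X ψ‖ = 1 := by
    intro X hX hXsq
    have h1 : ⟪X ψ, X ψ⟫_ℂ = ⟪ψ, ψ⟫_ℂ := by
      rw [sym X hX]
      have : X (X ψ) = ψ := by
        have := congrArg (fun T : H →L[ℂ] H => T ψ) hXsq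
        simpa using this
      rw [this]
    have h3 : ‖X ψ‖ ^ 2 = ‖ψ‖ ^ 2 := by
      have := congrArg (RCLike.re (K := ℂ)) h1
      rwa [inner_self_eq_norm_sq, inner_self_eq_norm_sq] at this
    nlinarith [norm_nonneg (X ψ), norm_nonneg ψ]
  have hAB₀ : IsSelfAdjoint (A₀ * B₀) := by
    rw [IsSelfAdjoint, star_mul, hA₀.star_eq, hB₀.star_eq, hc₀₀.eq]
  have hAB₀sq : (A₀ * B₀) * (A₀ * B₀) = 1 := by
    calc (A₀ * B₀) * (A₀ * B₀) = A₀ * (B₀ * A₀) * B₀ := by noncomm_ring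
    _ = A₀ * (A₀ * B₀) * B₀ := by rw [hc₀₀.eq]
    _ = (A₀ * A₀) * (B₀ * B₀) := by noncomm_ring
    _ = 1 := by rw [hA₀sq, hB₀sq, one_mul]
  have hfix : (A₀ * B₀) ψ = ψ := by
    have := (inner_eq_one_iff_of_norm_eq_one hψ (npres _ hAB₀ hAB₀sq)).mp hcorr
    exact this.symm
  have hp : B₀ ψ = A₀ ψ := by
    have h := congrArg A₀ hfix
    have h2 : A₀ ((A₀ * B₀) ψ) = B₀ ψ := by
      have := congrArg (fun T : H →L[ℂ] H => T (B₀ ψ)) hA₀sq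
      simpa [ContinuousLinearMap.mul_apply] using this
    rw [h2] at h
    exact h
  set a := A₁ ψ with ha
  set b₀ := B₀ ψ with hb₀
  set b₁ := B₁ ψ with hb₁
  have hna : ‖a‖ = 1 := npres A₁ hA₁ hA₁sq
  have hnb₀ : ‖b₀‖ = 1 := npres B₀ hB₀ hB₀sq
  have hnb₁ : ‖b₁‖ = 1 := npres B₁ hB₁ hB₁sq
  -- expand the inner product
  have hx : ⟪ψ, (A₀ * B₁) ψ⟫_ℂ = ⟪b₀, b₁⟫_ℂ := by
    rw [ContinuousLinearMap.mul_apply, ← sym A₀ hA₀, hb₁, ← hp]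
  have hy : ⟪ψ, (A₁ * B₀) ψ⟫_ℂ = ⟪a, b₀⟫_ℂ := by
    rw [ContinuousLinearMap.mul_apply, ← sym A₁ hA₁]
  have hz : ⟪ψ, (A₁ * B₁) ψ⟫_ℂ = ⟪a, b₁⟫_ℂ := by
    rw [ContinuousLinearMap.mul_apply, ← sym A₁ hA₁]
  have hone : ⟪ψ, (A₀ * B₀) ψ⟫_ℂ = 1 := hcorr
  have hsplit : ⟪ψ, (A₀ * B₀ + A₀ * B₁ + A₁ * B₀ - A₁ * B₁) ψ⟫_ℂ
      = 1 + ⟪b₀, b₁⟫_ℂ + ⟪a, b₀⟫_ℂ - ⟪a, b₁⟫_ℂ := by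
    simp only [ContinuousLinearMap.add_apply, ContinuousLinearMap.sub_apply,
      inner_add_right, inner_sub_right, hone, hx, hy, hz]
  rw [hsplit]
  -- realness
  have hreal : ∀ (X : H →L[ℂ] H), IsSelfAdjoint X → (⟪ψ, X ψ⟫_ℂ).im = 0 := by
    intro X hX
    have : (starRingEnd ℂ) ⟪ψ, X ψ⟫_ℂ = ⟪ψ, X ψ⟫_ℂ := by
      rw [inner_conj_symm, sym X hX]
    exact Complex.conj_eq_iff_im.mp this
  have hAB₁ : IsSelfAdjoint (A₀ * B₁) := by
    rw [IsSelfAdjoint, star_mul, hA₀.star_eq, hB₁.star_eq, hc₀₁.eq]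
  have hA₁B₀ : IsSelfAdjoint (A₁ * B₀) := by
    rw [IsSelfAdjoint, star_mul, hA₁.star_eq, hB₀.star_eq, hc₁₀.eq]
  have hA₁B₁ : IsSelfAdjoint (A₁ * B₁) := by
    rw [IsSelfAdjoint, star_mul, hA₁.star_eq, hB₁.star_eq, hc₁₁.eq]
  have himx : (⟪b₀, b₁⟫_ℂ).im = 0 := by rw [← hx]; exact hreal _ hAB₁
  have himy : (⟪a, b₀⟫_ℂ).im = 0 := by rw [← hy]; exact hreal _ hA₁B₀
  have himz : (⟪a, b₁⟫_ℂ).im = 0 := by rw [← hz]; exact hreal _ hA₁B₁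
  set x := (⟪b₀, b₁⟫_ℂ).re
  set y := (⟪a, b₀⟫_ℂ).re
  set z := (⟪a, b₁⟫_ℂ).re
  have habs : ‖(1 + ⟪b₀, b₁⟫_ℂ + ⟪a, b₀⟫_ℂ - ⟪a, b₁⟫_ℂ)‖ = |1 + x + y - z| := by
    have : (1 + ⟪b₀, b₁⟫_ℂ + ⟪a, b₀⟫_ℂ - ⟪a, b₁⟫_ℂ) = ((1 + x + y - z : ℝ) : ℂ) := by
      apply Complex.ext <;> simp [himx, himy, himz, x, y, z]
    rw [this, Complex.norm_real, Real.norm_eq_abs]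
  rw [habs]
  -- real bounds
  have hxle : x ≤ 1 := by
    have := re_inner_le_norm (𝕜 := ℂ) b₀ b₁
    rw [hnb₀, hnb₁] at this; simpa using this
  have hxge : -1 ≤ x := by
    have := re_inner_le_norm (𝕜 := ℂ) b₀ (-b₁)
    rw [hnb₀, norm_neg, hnb₁, inner_neg_right] at this
    simp only [RCLike.re_to_complex, Complex.neg_re, mul_one] at this
    linarith
  have hyge : -1 ≤ y := by
    have := re_inner_le_norm (𝕜 := ℂ) a (-b₀)
    rw [hna, norm_neg, hnb₀, inner_neg_right] at this
    simp only [RCLike.re_to_complex, Complex.neg_re, mul_one] at this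
    linarith
  have hzle : z ≤ 1 := by
    have := re_inner_le_norm (𝕜 := ℂ) a b₁
    rw [hna, hnb₁] at this; simpa using this
  have hs : y - z ≤ ‖b₀ - b₁‖ := by
    have := re_inner_le_norm (𝕜 := ℂ) a (b₀ - b₁)
    rw [hna, inner_sub_right, one_mul] at this
    simpa [RCLike.re_to_complex, Complex.sub_re, y, z] using this
  have hw : ‖b₀ - b₁‖ ^ 2 = 2 - 2 * x := by
    rw [@norm_sub_sq ℂ, hnb₀, hnb₁]
    simp [x]; ring
  rw [abs_le]
  constructor
  · linarith
  · nlinarith [sq_nonneg (‖b₀ - b₁‖ - 1), norm_nonneg (b₀ - b₁)]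
end

section
/- For unit vectors a₀, a₁, b₀, b₁ in a complex Hilbert space with a₀ = b₀ and ⟨b₀,b₁⟩ real, one has |1 + ⟨b₀,b₁⟩ + ⟨a₁,b₀⟩ − ⟨a₁,b₁⟩| ≤ |1 + ⟨b₀,b₁⟩| + √2·√(1 − ⟨b₀,b₁⟩) ≤ 5/2. -/
open scoped InnerProductSpace

/-- For unit vectors `a₀, a₁, b₀, b₁` in a complex Hilbert space with `a₀ = b₀` and
`⟨b₀,b₁⟩` real, `|1 + ⟨b₀,b₁⟩ + ⟨a₁,b₀⟩ − ⟨a₁,b₁⟩| ≤ |1 + ⟨b₀,b₁⟩| + √2·√(1 − ⟨b₀,b₁⟩) ≤ 5/2`. -/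
theorem chsh_vector_bound
    {H : Type*} [NormedAddCommGroup H] [InnerProductSpace ℂ H]
    (a₀ a₁ b₀ b₁ : H)
    (ha₀ : ‖a₀‖ = 1) (ha₁ : ‖a₁‖ = 1) (hb₀ : ‖b₀‖ = 1) (hb₁ : ‖b₁‖ = 1)
    (hab : a₀ = b₀) (hreal : (⟪b₀, b₁⟫_ℂ).im = 0) :
    ‖1 + ⟪b₀, b₁⟫_ℂ + ⟪a₁, b₀⟫_ℂ - ⟪a₁, b₁⟫_ℂ‖
        ≤ |1 + (⟪b₀, b₁⟫_ℂ).re| + Real.sqrt 2 * Real.sqrt (1 - (⟪b₀, b₁⟫_ℂ).re)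
      ∧ |1 + (⟪b₀, b₁⟫_ℂ).re| + Real.sqrt 2 * Real.sqrt (1 - (⟪b₀, b₁⟫_ℂ).re) ≤ 5 / 2 := by
  set t : ℝ := (⟪b₀, b₁⟫_ℂ).re with ht
  have habs : ‖⟪b₀, b₁⟫_ℂ‖ ≤ 1 := by
    calc ‖⟪b₀, b₁⟫_ℂ‖ = ‖⟪b₀, b₁⟫_ℂ‖ := rfl
    _ ≤ ‖b₀‖ * ‖b₁‖ := norm_inner_le_norm (𝕜 := ℂ) _ _
    _ = 1 := by rw [hb₀, hb₁]; ring
  have ht1 : |t| ≤ 1 := (Complex.abs_re_le_norm _).trans habs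
  have ht1' : t ≤ 1 := (abs_le.mp ht1).2
  have ht1'' : -1 ≤ t := (abs_le.mp ht1).1
  -- norm of b₀ - b₁
  have hnormsq : ‖b₀ - b₁‖ ^ 2 = 2 - 2 * t := by
    have := @norm_sub_sq ℂ H _ _ _ b₀ b₁
    rw [hb₀, hb₁] at this
    rw [this]
    simp only [RCLike.re_to_complex]
    ring
  have hnorm : ‖b₀ - b₁‖ = Real.sqrt 2 * Real.sqrt (1 - t) := by
    rw [← Real.sqrt_mul (by norm_num) (1 - t)]
    rw [show Real.sqrt (2 * (1 - t)) = Real.sqrt (2 - 2 * t) by ring_nf]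
    rw [← hnormsq, Real.sqrt_sq (norm_nonneg _)]
  constructor
  · have h1 : (1 : ℂ) + ⟪b₀, b₁⟫_ℂ + ⟪a₁, b₀⟫_ℂ - ⟪a₁, b₁⟫_ℂ
        = (1 + ⟪b₀, b₁⟫_ℂ) + ⟪a₁, b₀ - b₁⟫_ℂ := by
      rw [inner_sub_right]; ring
    rw [h1]
    calc ‖(1 + ⟪b₀, b₁⟫_ℂ) + ⟪a₁, b₀ - b₁⟫_ℂ‖
        ≤ ‖1 + ⟪b₀, b₁⟫_ℂ‖ + ‖⟪a₁, b₀ - b₁⟫_ℂ‖ :=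
          norm_add_le _ _
      _ ≤ |1 + t| + Real.sqrt 2 * Real.sqrt (1 - t) := by
          have hA : ‖1 + ⟪b₀, b₁⟫_ℂ‖ = |1 + t| := by
            have : (1 : ℂ) + ⟪b₀, b₁⟫_ℂ = ((1 + t : ℝ) : ℂ) := by
              apply Complex.ext <;> simp [hreal, ht]
            rw [this, Complex.norm_real, Real.norm_eq_abs]
          have hB : ‖⟪a₁, b₀ - b₁⟫_ℂ‖ ≤ Real.sqrt 2 * Real.sqrt (1 - t) := by
            calc ‖⟪a₁, b₀ - b₁⟫_ℂ‖ = ‖⟪a₁, b₀ - b₁⟫_ℂ‖ := rfl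
              _ ≤ ‖a₁‖ * ‖b₀ - b₁‖ := norm_inner_le_norm (𝕜 := ℂ) _ _
              _ = Real.sqrt 2 * Real.sqrt (1 - t) := by rw [ha₁, hnorm]; ring
          linarith
  · have habs' : |1 + t| = 1 + t := abs_of_nonneg (by linarith)
    rw [habs']
    set s : ℝ := Real.sqrt (1 - t) with hs
    have hs2 : s ^ 2 = 1 - t := Real.sq_sqrt (by linarith)
    have h2 : (Real.sqrt 2) ^ 2 = 2 := Real.sq_sqrt (by norm_num)
    have hkey : 0 ≤ (s - Real.sqrt 2 / 2) ^ 2 := sq_nonneg _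
    nlinarith [Real.sqrt_nonneg 2, Real.sqrt_nonneg (1 - t)]
end

section
/- With Q, D, v, Π as above (Q² = 𝟙 self-adjoint, D = 2|v⟩⟨v| − 𝟙, Π projection onto span{v, Qv}), the commutator satisfies [Q, D] = [ΠQΠ, ΠDΠ]. -/
open scoped InnerProductSpace

/-- With `Q` a self-adjoint involution, `v` a unit vector, `D = 2|v⟩⟨v| − 𝟙` and `Pi`
the orthogonal projection onto `span{v, Qv}`, the commutator satisfies
`[Q, D] = [PiQPi, PiDPi]`. -/
theorem commutator_restriction
    {H : Type*} [NormedAddCommGroup H] [InnerProductSpace ℂ H] [CompleteSpace H]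
    (Q D Pi : H →L[ℂ] H) (v : H) (hv : ‖v‖ = 1)
    (hQ : IsSelfAdjoint Q) (hQsq : Q * Q = 1)
    (hD : ∀ x, D x = (2 : ℂ) • (⟪v, x⟫_ℂ • v) - x)
    (hPisa : IsSelfAdjoint Pi) (hPiidem : Pi * Pi = Pi)
    (hPirange : LinearMap.range (Pi : H →ₗ[ℂ] H) = Submodule.span ℂ {v, Q v}) :
    Q * D - D * Q = (Pi * Q * Pi) * (Pi * D * Pi) - (Pi * D * Pi) * (Pi * Q * Pi) := by
  -- Pi fixes its range
  have hfix : ∀ w ∈ LinearMap.range (Pi : H →ₗ[ℂ] H), Pi w = w := by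
    rintro w ⟨u, rfl⟩
    have := congrArg (fun T : H →L[ℂ] H => T u) hPiidem
    simpa [ContinuousLinearMap.mul_apply] using this
  have hPiv : Pi v = v := by
    refine hfix v ?_
    rw [hPirange]; exact Submodule.subset_span (by simp)
  have hPiQv : Pi (Q v) = Q v := by
    refine hfix (Q v) ?_
    rw [hPirange]; exact Submodule.subset_span (by simp)
  -- adjoint properties
  have hPiadj : ∀ x y : H, ⟪Pi x, y⟫_ℂ = ⟪x, Pi y⟫_ℂ := by
    intro x y
    simpa [hPisa.adjoint_eq] using ContinuousLinearMap.adjoint_inner_left Pi y x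
  have hQadj : ∀ x y : H, ⟪Q x, y⟫_ℂ = ⟪x, Q y⟫_ℂ := by
    intro x y
    simpa [hQ.adjoint_eq] using ContinuousLinearMap.adjoint_inner_left Q y x
  have hvPi : ∀ x : H, ⟪v, Pi x⟫_ℂ = ⟪v, x⟫_ℂ := by
    intro x; rw [← hPiadj, hPiv]
  have hQvPi : ∀ x : H, ⟪Q v, Pi x⟫_ℂ = ⟪Q v, x⟫_ℂ := by
    intro x; rw [← hPiadj, hPiQv]
  ext x
  simp only [ContinuousLinearMap.sub_apply, ContinuousLinearMap.mul_apply]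
  have hPiPix : Pi (Pi x) = Pi x := by
    have := congrArg (fun T : H →L[ℂ] H => T x) hPiidem
    simpa [ContinuousLinearMap.mul_apply] using this
  -- compute ΠDΠ x
  have h1 : Pi (D (Pi x)) = (2 : ℂ) • (⟪v, x⟫_ℂ • v) - Pi x := by
    rw [hD, map_sub, map_smul, map_smul, hPiv, hvPi, hPiPix]
  -- compute inner of v with ΠQΠ x
  have h2 : ⟪v, Pi (Q (Pi x))⟫_ℂ = ⟪v, Q x⟫_ℂ := by
    rw [hvPi, ← hQadj, hQvPi, hQadj]
  rw [h1]
  simp only [map_sub, map_smul, hD, hPiv, hPiQv, hPiPix, h2,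
    inner_sub_right, inner_smul_right, hvPi]
  have hPP : ∀ y : H, Pi (Pi y) = Pi y := by
    intro y
    have := congrArg (fun T : H →L[ℂ] H => T y) hPiidem
    simpa [ContinuousLinearMap.mul_apply] using this
  simp only [hPP]
  abel
end

section
/- For θ ∈ (0, π), let Q_R = cos θ·σ_z + sin θ·σ_x and D_R = −σ_z be 2×2 Hermitian matrices, and 𝓑 = Q_R⊗Q_R + Q_R⊗D_R + D_R⊗Q_R − D_R⊗D_R. Then ‖𝓑‖ = 2√(1 + sin²θ). -/
open Matrix Complex
open scoped Kronecker

private lemma sub_kron {m n : Type*} (A B : Matrix m m ℂ) (C : Matrix n n ℂ) :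
    (A - B) ⊗ₖ C = A ⊗ₖ C - B ⊗ₖ C := by
  ext ⟨i, j⟩ ⟨k, l⟩
  simp [Matrix.kroneckerMap_apply, sub_mul]

private lemma kron_sub {m n : Type*} (A : Matrix m m ℂ) (B C : Matrix n n ℂ) :
    A ⊗ₖ (B - C) = A ⊗ₖ B - A ⊗ₖ C := by
  ext ⟨i, j⟩ ⟨k, l⟩
  simp [Matrix.kroneckerMap_apply, mul_sub]

private lemma chsh_sq {Q D : Matrix (Fin 2) (Fin 2) ℂ} (hQ : Q * Q = 1) (hD : D * D = 1) :
    (Q ⊗ₖ Q + Q ⊗ₖ D + D ⊗ₖ Q - D ⊗ₖ D) * (Q ⊗ₖ Q + Q ⊗ₖ D + D ⊗ₖ Q - D ⊗ₖ D)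
      = (4 : ℂ) • (1 : Matrix (Fin 2 × Fin 2) (Fin 2 × Fin 2) ℂ)
        - (Q * D - D * Q) ⊗ₖ (Q * D - D * Q) := by
  simp only [sub_kron, kron_sub, add_mul, mul_add, sub_mul, mul_sub,
    ← Matrix.mul_kronecker_mul, hQ, hD, Matrix.one_kronecker_one]
  module

set_option maxHeartbeats 1000000 in
set_option synthInstance.maxHeartbeats 400000 in
/-- For `θ ∈ (0, π)`, with `Q_R = cos θ·σ_z + sin θ·σ_x`, `D_R = −σ_z` and the CHSH
operator `𝓑 = Q_R⊗Q_R + Q_R⊗D_R + D_R⊗Q_R − D_R⊗D_R`, one has `‖𝓑‖ = 2√(1 + sin²θ)`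
(operator norm). -/
theorem chsh_norm_hybrid (θ : ℝ) (hθ : θ ∈ Set.Ioo 0 Real.pi)
    (σx σz QR DR : Matrix (Fin 2) (Fin 2) ℂ)
    (hσx : σx = !![0, 1; 1, 0]) (hσz : σz = !![1, 0; 0, -1])
    (hQR : QR = (Real.cos θ : ℂ) • σz + (Real.sin θ : ℂ) • σx)
    (hDR : DR = -σz) :
    ‖Matrix.toEuclideanCLM (𝕜 := ℂ)
        (QR ⊗ₖ QR + QR ⊗ₖ DR + DR ⊗ₖ QR - DR ⊗ₖ DR)‖
      = 2 * Real.sqrt (1 + Real.sin θ ^ 2) := by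
  have hs : (Real.sin θ : ℂ) ^ 2 + (Real.cos θ : ℂ) ^ 2 = 1 := by
    exact_mod_cast congrArg (Complex.ofReal) (Real.sin_sq_add_cos_sq θ)
  -- basic matrix facts
  have hQ2 : QR * QR = 1 := by
    subst hσx hσz hQR
    ext i j
    fin_cases i <;> fin_cases j <;>
      simp [Matrix.mul_apply, Fin.sum_univ_two, Matrix.one_apply,
        -Complex.ofReal_cos, -Complex.ofReal_sin] <;>
      first | ring1 | linear_combination hs
  have hD2 : DR * DR = 1 := by
    subst hσz hDR
    ext i j
    fin_cases i <;> fin_cases j <;>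
      simp [Matrix.mul_apply, Fin.sum_univ_two, Matrix.one_apply]
  have hcomm : QR * DR - DR * QR
      = ((2 * Real.sin θ : ℝ) : ℂ) • !![0, 1; -1, 0] := by
    subst hσx hσz hQR hDR
    ext i j
    fin_cases i <;> fin_cases j <;>
      simp [Matrix.mul_apply, Fin.sum_univ_two,
        -Complex.ofReal_cos, -Complex.ofReal_sin] <;> ring
  set M : Matrix (Fin 2 × Fin 2) (Fin 2 × Fin 2) ℂ :=
    QR ⊗ₖ QR + QR ⊗ₖ DR + DR ⊗ₖ QR - DR ⊗ₖ DR with hMdef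
  set K : Matrix (Fin 2 × Fin 2) (Fin 2 × Fin 2) ℂ :=
    !![0, 1; -1, 0] ⊗ₖ !![0, 1; -1, 0] with hKdef
  have hherm : Mᴴ = M := by
    rw [hMdef]
    subst hσx hσz hQR hDR
    ext ⟨i, j⟩ ⟨k, l⟩
    fin_cases i <;> fin_cases j <;> fin_cases k <;> fin_cases l <;>
      simp [Matrix.conjTranspose_apply, Matrix.kroneckerMap_apply, Complex.conj_ofReal,
        -Complex.ofReal_cos, -Complex.ofReal_sin] <;> ring
  have hK2 : K * K = 1 := by
    rw [hKdef]
    ext ⟨i, j⟩ ⟨k, l⟩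
    fin_cases i <;> fin_cases j <;> fin_cases k <;> fin_cases l <;>
      simp [Matrix.mul_apply, Fintype.sum_prod_type, Fin.sum_univ_two,
        Matrix.kroneckerMap_apply, Matrix.one_apply, Prod.ext_iff, Fin.ext_iff]
  set r : ℝ := 2 * Real.sin θ with hrdef
  have hM2 : M * M = (4 : ℂ) • 1 - ((r : ℂ) * (r : ℂ)) • K := by
    rw [hMdef, chsh_sq hQ2 hD2, hcomm, Matrix.smul_kronecker, Matrix.kronecker_smul,
      smul_smul, hKdef]
  -- move to operators
  set T := Matrix.toEuclideanCLM (𝕜 := ℂ) M with hTdef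
  set S := Matrix.toEuclideanCLM (𝕜 := ℂ) K with hSdef
  have hT2 : T * T = (4 : ℂ) • 1 - ((r : ℂ) * (r : ℂ)) • S := by
    rw [hTdef, hSdef, ← _root_.map_mul, hM2, map_sub, _root_.map_smul, _root_.map_smul, _root_.map_one]
  have hS2 : S * S = 1 := by rw [hSdef, ← _root_.map_mul, hK2, _root_.map_one]
  have hSnorm : ‖S‖ = 1 := by
    have hKh : star K = K := by
      rw [Matrix.star_eq_conjTranspose, hKdef]
      ext ⟨i, j⟩ ⟨k, l⟩
      fin_cases i <;> fin_cases j <;> fin_cases k <;> fin_cases l <;>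
        simp [Matrix.conjTranspose_apply, Matrix.kroneckerMap_apply]
    have h := CStarRing.norm_star_mul_self (x := S)
    rw [show star S = S by rw [hSdef, ← map_star, hKh], hS2, norm_one] at h
    nlinarith [norm_nonneg S]
  -- the eigenvector for eigenvalue -1 of S
  set f : (Fin 2 × Fin 2) → ℂ :=
    fun p => if p = (0, 0) then 1 else if p = (1, 1) then -1 else 0 with hfdef
  set v : EuclideanSpace ℂ (Fin 2 × Fin 2) := (WithLp.equiv 2 _).symm f with hvdef
  have hKf : K.mulVec f = -f := by
    funext p
    obtain ⟨i, j⟩ := p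
    rw [hKdef, hfdef]
    fin_cases i <;> fin_cases j <;>
      simp [Matrix.mulVec, dotProduct, Fintype.sum_prod_type, Fin.sum_univ_two,
        Matrix.kroneckerMap_apply, Prod.ext_iff]
  have hSv : S v = -v := by
    rw [hSdef, hvdef, WithLp.equiv_symm_apply, Matrix.toEuclideanCLM_toLp, hKf]
    rfl
  have hvne : v ≠ 0 := by
    intro h
    have : f (0, 0) = 0 := by
      rw [show f = WithLp.equiv 2 _ v from rfl, h]
      rfl
    simp [hfdef] at this
  have hTTv : (T * T) v = ((4 + r * r : ℝ) : ℂ) • v := by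
    rw [hT2]
    simp only [ContinuousLinearMap.sub_apply, ContinuousLinearMap.smul_apply,
      ContinuousLinearMap.one_apply, hSv, smul_neg, sub_neg_eq_add, ← add_smul]
    congr 1
    push_cast
    ring
  have hrr : (0 : ℝ) ≤ r * r := mul_self_nonneg r
  have hTT : ‖T * T‖ = 4 + r * r := by
    apply le_antisymm
    · calc ‖T * T‖ = ‖(4 : ℂ) • (1 : EuclideanSpace ℂ (Fin 2 × Fin 2) →L[ℂ] _)
            - ((r : ℂ) * (r : ℂ)) • S‖ := by rw [hT2]
      _ ≤ ‖(4 : ℂ) • (1 : EuclideanSpace ℂ (Fin 2 × Fin 2) →L[ℂ] _)‖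
            + ‖((r : ℂ) * (r : ℂ)) • S‖ := norm_sub_le _ _
      _ = 4 + r * r := by
          rw [norm_smul ((4 : ℂ))
              (1 : EuclideanSpace ℂ (Fin 2 × Fin 2) →L[ℂ] EuclideanSpace ℂ (Fin 2 × Fin 2)),
            norm_smul ((r : ℂ) * (r : ℂ)) S, norm_one, hSnorm, mul_one, mul_one,
            ← Complex.ofReal_mul, Complex.norm_real, Real.norm_of_nonneg hrr]
          norm_num
    · have h := (T * T).le_opNorm v
      rw [hTTv, norm_smul] at h
      have hnv : 0 < ‖v‖ := norm_pos_iff.mpr hvne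
      have : ‖((4 + r * r : ℝ) : ℂ)‖ = 4 + r * r := by
        rw [Complex.norm_real, Real.norm_of_nonneg (by linarith)]
      rw [this] at h
      exact le_of_mul_le_mul_right h hnv
  -- self-adjointness and the C*-identity
  have hstar : star T = T := by
    rw [hTdef, ← map_star, Matrix.star_eq_conjTranspose, hherm]
  have hTn : ‖T‖ * ‖T‖ = 4 + r * r := by
    rw [← hTT, ← CStarRing.norm_star_mul_self (x := T), hstar]
  have h1 : ‖T‖ * ‖T‖ = 4 * (1 + Real.sin θ ^ 2) := by
    rw [hTn, hrdef]; ring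
  calc ‖T‖ = Real.sqrt (‖T‖ * ‖T‖) := (Real.sqrt_mul_self (norm_nonneg T)).symm
    _ = Real.sqrt (4 * (1 + Real.sin θ ^ 2)) := by rw [h1]
    _ = 2 * Real.sqrt (1 + Real.sin θ ^ 2) := by
        rw [Real.sqrt_mul (by norm_num), show (4 : ℝ) = 2 ^ 2 by norm_num,
          Real.sqrt_sq (by norm_num)]
end

section
/- For every n ≥ 1, ∫_{ℝ⁺} φ₀(x) φ_{2n+1}(x) dx = (−1)ⁿ (2n)! / (√(2π(2n+1)!) · 2ⁿ n!), where φ_k denotes the k-th Hermite function. -/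
/-- The physicists' Hermite polynomials, via the recurrence
`H_{n+2}(x) = 2x·H_{n+1}(x) − 2(n+1)·H_n(x)`, `H₀ = 1`, `H₁(x) = 2x`. -/
noncomputable def physHermite : ℕ → ℝ → ℝ
  | 0, _ => 1
  | 1, x => 2 * x
  | (n + 2), x => 2 * x * physHermite (n + 1) x - 2 * (n + 1) * physHermite n x

/-- The `n`-th Hermite function `φ_n(x) = (2ⁿ n! √π)^{−1/2} H_n(x) e^{−x²/2}`. -/
noncomputable def hermiteFun (n : ℕ) (x : ℝ) : ℝ :=
  Real.sqrt ((2 ^ n * (n.factorial : ℝ) * Real.sqrt Real.pi))⁻¹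
    * physHermite n x * Real.exp (-x ^ 2 / 2)

open Real MeasureTheory Set Filter Topology

/-- Formal derivative of `physHermite`. -/
noncomputable def physHermiteD : ℕ → ℝ → ℝ
  | 0, _ => 0
  | (k + 1), x => 2 * (k + 1) * physHermite k x

lemma physHermite_succ_eq (k : ℕ) (x : ℝ) :
    physHermite (k + 1) x = 2 * x * physHermite k x - physHermiteD k x := by
  cases k with
  | zero => simp [physHermite, physHermiteD]
  | succ j => simp [physHermite, physHermiteD]

lemma hasDerivAt_physHermite : ∀ (k : ℕ) (x : ℝ),
    HasDerivAt (physHermite k) (physHermiteD k x) x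
  | 0, x => by
      simpa [physHermite, physHermiteD] using hasDerivAt_const x (1 : ℝ)
  | 1, x => by
      have h : HasDerivAt (fun y : ℝ => 2 * y) 2 x := by
        simpa using (hasDerivAt_id x).const_mul (2 : ℝ)
      have he : physHermite 1 = fun y : ℝ => 2 * y := by
        funext y; rfl
      rw [he]
      simpa [physHermiteD, physHermite] using h
  | (k + 2), x => by
      have h1 := hasDerivAt_physHermite (k + 1) x
      have h0 := hasDerivAt_physHermite k x
      have he : physHermite (k + 2)
          = fun y : ℝ => 2 * y * physHermite (k + 1) y - 2 * (k + 1) * physHermite k y := by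
        funext y; rfl
      rw [he]
      have hx : HasDerivAt
          (fun y : ℝ => 2 * y * physHermite (k + 1) y - 2 * (k + 1) * physHermite k y)
          ((2 * physHermite (k + 1) x + 2 * x * physHermiteD (k + 1) x)
            - 2 * (k + 1) * physHermiteD k x) x := by
        have hmul : HasDerivAt (fun y : ℝ => 2 * y * physHermite (k + 1) y)
            (2 * physHermite (k + 1) x + 2 * x * physHermiteD (k + 1) x) x := by
          have := (((hasDerivAt_id x).const_mul (2 : ℝ)).fun_mul h1)
          refine this.congr_deriv ?_
          simp [mul_comm]
        exact hmul.sub (h0.const_mul (2 * ((k : ℝ) + 1)))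
      convert hx using 1
      have h2 : physHermiteD (k + 1) x = 2 * ((k : ℝ) + 1) * physHermite k x := by
        simp [physHermiteD]
      have h4 : physHermiteD (k + 2) x = 2 * (((k + 1 : ℕ) : ℝ) + 1) * physHermite (k + 1) x :=
        rfl
      have h3 : physHermite (k + 1) x = 2 * x * physHermite k x - physHermiteD k x :=
        physHermite_succ_eq k x
      rw [h4, h2, h3]
      push_cast
      ring

lemma hasDerivAt_physHermite_gauss (k : ℕ) (x : ℝ) :
    HasDerivAt (fun y => physHermite k y * Real.exp (-y ^ 2))
      (-(physHermite (k + 1) x * Real.exp (-x ^ 2))) x := by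
  have hpow : HasDerivAt (fun y : ℝ => -y ^ 2) (-(2 * x)) x := by
    simpa using (hasDerivAt_pow 2 x).fun_neg
  have he : HasDerivAt (fun y : ℝ => Real.exp (-y ^ 2))
      (Real.exp (-x ^ 2) * (-(2 * x))) x := hpow.exp
  have := (hasDerivAt_physHermite k x).fun_mul he
  refine this.congr_deriv ?_
  rw [physHermite_succ_eq]
  ring

lemma physHermite_poly : ∀ k : ℕ, ∃ p : Polynomial ℝ, ∀ x, physHermite k x = p.eval x
  | 0 => ⟨1, fun x => by simp [physHermite]⟩
  | 1 => ⟨Polynomial.C 2 * Polynomial.X, fun x => by simp [physHermite]⟩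
  | (k + 2) => by
      obtain ⟨p, hp⟩ := physHermite_poly k
      obtain ⟨q, hq⟩ := physHermite_poly (k + 1)
      refine ⟨Polynomial.C 2 * Polynomial.X * q - Polynomial.C (2 * ((k : ℝ) + 1)) * p,
        fun x => ?_⟩
      simp [physHermite, hp, hq]

lemma integrableOn_poly_gauss (p : Polynomial ℝ) :
    IntegrableOn (fun x => p.eval x * Real.exp (-x ^ 2)) (Ioi (0 : ℝ)) := by
  induction p using Polynomial.induction_on' with
  | monomial m c =>
      have h1 : IntegrableOn (fun x : ℝ => x ^ (m : ℝ) * Real.exp (-1 * x ^ 2)) (Ioi 0) :=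
        integrableOn_rpow_mul_exp_neg_mul_sq one_pos
          (by exact_mod_cast neg_one_lt_zero.trans_le (Nat.cast_nonneg m))
      have h2 : IntegrableOn (fun x : ℝ => x ^ m * Real.exp (-x ^ 2)) (Ioi 0) := by
        simpa [Real.rpow_natCast] using h1
      have h3 := h2.const_mul c
      have hfe : (fun x : ℝ => Polynomial.eval x (Polynomial.monomial m c) * Real.exp (-x ^ 2))
          = fun x : ℝ => c * (x ^ m * Real.exp (-x ^ 2)) := by
        funext x; simp [Polynomial.eval_monomial]; ring
      rw [hfe]; exact h3
  | add p q hp hq =>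
      have h3 := hp.add hq
      have hfe : (fun x : ℝ => Polynomial.eval x (p + q) * Real.exp (-x ^ 2))
          = fun x : ℝ => Polynomial.eval x p * Real.exp (-x ^ 2)
            + Polynomial.eval x q * Real.exp (-x ^ 2) := by
        funext x; simp; ring
      rw [hfe]; exact h3

lemma tendsto_poly_gauss (p : Polynomial ℝ) :
    Tendsto (fun x => p.eval x * Real.exp (-x ^ 2)) atTop (𝓝 0) := by
  have h1 := p.tendsto_div_exp_atTop
  have hb : Tendsto (fun x : ℝ => x - x ^ 2) atTop atBot := by
    have hle : ∀ᶠ x : ℝ in atTop, x - x ^ 2 ≤ 1 + -x := by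
      filter_upwards [eventually_ge_atTop (1 : ℝ)] with x hx
      nlinarith
    exact tendsto_atBot_mono' _ hle
      (tendsto_atBot_add_const_left _ 1 tendsto_neg_atTop_atBot)
  have h2 : Tendsto (fun x : ℝ => Real.exp (x - x ^ 2)) atTop (𝓝 0) :=
    Real.tendsto_exp_atBot.comp hb
  have := h1.mul h2
  rw [mul_zero] at this
  apply this.congr
  intro x
  rw [show x - x ^ 2 = x + -x ^ 2 by ring, Real.exp_add, ← mul_assoc,
    div_mul_cancel₀ _ (Real.exp_ne_zero x)]

lemma physHermite_even_zero : ∀ n : ℕ,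
    physHermite (2 * n) 0 = (-1 : ℝ) ^ n * (2 * n).factorial / n.factorial
  | 0 => by simp [physHermite]
  | (n + 1) => by
      have ih := physHermite_even_zero n
      have h : 2 * (n + 1) = 2 * n + 1 + 1 := by ring
      rw [h]
      have hrec : physHermite (2 * n + 1 + 1) 0
          = 2 * 0 * physHermite (2 * n + 1) 0 - 2 * ((2 * n : ℕ) + 1) * physHermite (2 * n) 0 := by
        rfl
      rw [hrec, ih]
      have hf1 : ((2 * n + 1 + 1).factorial : ℝ)
          = (2 * n + 2) * ((2 * n + 1) * (2 * n).factorial) := by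
        push_cast [Nat.factorial_succ]
        ring
      have hf2 : ((n + 1).factorial : ℝ) = (n + 1) * n.factorial := by
        push_cast [Nat.factorial_succ]; ring
      have hn0 : (n.factorial : ℝ) ≠ 0 := by positivity
      have hn1 : ((n : ℝ) + 1) ≠ 0 := by positivity
      rw [hf1, hf2]
      push_cast
      field_simp
      ring

lemma integral_physHermite_gauss (m : ℕ) :
    ∫ x in Ioi (0 : ℝ), physHermite (m + 1) x * Real.exp (-x ^ 2) = physHermite m 0 := by
  obtain ⟨p, hp⟩ := physHermite_poly (m + 1)
  obtain ⟨q, hq⟩ := physHermite_poly m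
  have hderiv : ∀ x ∈ Ici (0 : ℝ),
      HasDerivAt (fun y => -(physHermite m y * Real.exp (-y ^ 2)))
        (physHermite (m + 1) x * Real.exp (-x ^ 2)) x := by
    intro x _
    simpa using (hasDerivAt_physHermite_gauss m x).fun_neg
  have hint : IntegrableOn (fun x => physHermite (m + 1) x * Real.exp (-x ^ 2)) (Ioi 0) := by
    have := integrableOn_poly_gauss p
    apply this.congr_fun _ measurableSet_Ioi
    intro x _
    simp only [hp]
  have htend : Tendsto (fun x => -(physHermite m x * Real.exp (-x ^ 2))) atTop (𝓝 0) := by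
    have := (tendsto_poly_gauss q).neg
    rw [neg_zero] at this
    apply this.congr
    intro x
    simp only [hq]
  have := MeasureTheory.integral_Ioi_of_hasDerivAt_of_tendsto' hderiv hint htend
  rw [this]
  simp

/-- For `n ≥ 1`,
`∫_{ℝ⁺} φ₀ φ_{2n+1} = (−1)ⁿ (2n)! / (√(2π(2n+1)!) · 2ⁿ n!)`. -/
theorem integral_halfline_hermite_odd (n : ℕ) (hn : 1 ≤ n) :
    ∫ x in Set.Ioi (0 : ℝ), hermiteFun 0 x * hermiteFun (2 * n + 1) x
      = (-1 : ℝ) ^ n * (2 * n).factorial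
          / (Real.sqrt (2 * Real.pi * ((2 * n + 1).factorial : ℝ)) * 2 ^ n * n.factorial) := by
  set C : ℝ := Real.sqrt ((2 ^ 0 * ((0 : ℕ).factorial : ℝ) * Real.sqrt Real.pi))⁻¹
      * Real.sqrt ((2 ^ (2 * n + 1) * (((2 * n + 1).factorial : ℝ)) * Real.sqrt Real.pi))⁻¹
      with hC
  have hpt : ∀ x : ℝ, hermiteFun 0 x * hermiteFun (2 * n + 1) x
      = C * (physHermite (2 * n + 1) x * Real.exp (-x ^ 2)) := by
    intro x
    have h0 : physHermite 0 x = 1 := rfl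
    have hexp : Real.exp (-x ^ 2 / 2) * Real.exp (-x ^ 2 / 2) = Real.exp (-x ^ 2) := by
      rw [← Real.exp_add]; ring_nf
    simp only [hermiteFun, h0, hC]
    rw [← hexp]
    ring
  have hInt : ∫ x in Set.Ioi (0 : ℝ), hermiteFun 0 x * hermiteFun (2 * n + 1) x
      = C * ∫ x in Set.Ioi (0 : ℝ), physHermite (2 * n + 1) x * Real.exp (-x ^ 2) := by
    simp_rw [hpt]
    exact MeasureTheory.integral_const_mul C _
  rw [hInt, integral_physHermite_gauss, physHermite_even_zero]
  -- now compute the constant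
  have hπ : (0 : ℝ) ≤ Real.pi := Real.pi_pos.le
  have hsπ : (0 : ℝ) ≤ Real.sqrt Real.pi := Real.sqrt_nonneg _
  have hfac : (0 : ℝ) ≤ ((2 * n + 1).factorial : ℝ) := Nat.cast_nonneg _
  have hCval : C = (Real.sqrt (2 * Real.pi * ((2 * n + 1).factorial : ℝ)) * 2 ^ n)⁻¹ := by
    rw [hC]
    rw [← Real.sqrt_mul (by positivity), ← mul_inv]
    have harg : (2 ^ 0 * ((0 : ℕ).factorial : ℝ) * Real.sqrt Real.pi)
        * (2 ^ (2 * n + 1) * (((2 * n + 1).factorial : ℝ)) * Real.sqrt Real.pi)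
        = (2 * Real.pi * ((2 * n + 1).factorial : ℝ)) * (4 : ℝ) ^ n := by
      have hsq : Real.sqrt Real.pi * Real.sqrt Real.pi = Real.pi :=
        Real.mul_self_sqrt hπ
      have hpow : (2 : ℝ) ^ (2 * n + 1) = 2 * 4 ^ n := by
        rw [pow_succ, pow_mul]
        norm_num
        ring
      simp only [pow_zero, Nat.factorial_zero, Nat.cast_one]
      rw [hpow]
      linear_combination (2 * (4 : ℝ) ^ n * (((2 * n + 1).factorial : ℝ))) * hsq
    rw [harg, Real.sqrt_inv, Real.sqrt_mul (by positivity),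
      show (4 : ℝ) ^ n = ((2 : ℝ) ^ n) ^ 2 by
        rw [show (4 : ℝ) = 2 ^ 2 by norm_num, ← pow_mul, ← pow_mul, Nat.mul_comm],
      Real.sqrt_sq (by positivity)]
  rw [hCval]
  field_simp
end

section
/- Let Q, D be 2×2 Hermitian involutions on ℂ² with D = −σ_z and Q = cos θ·σ_z + sin θ·σ_x, and consider the N00N-type constraint ⟨ψ| D⊗D |ψ⟩ = −1 for a unit vector ψ ∈ ℂ²⊗ℂ². Then |⟨ψ| Q⊗Q + Q⊗D + D⊗Q − D⊗D |ψ⟩| ≤ 5/2. -/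
open Matrix Complex
open scoped Kronecker

set_option maxHeartbeats 2000000 in
/-- For the 2×2 Hermitian involutions `Q = cos θ·σ_z + sin θ·σ_x`, `D = −σ_z` and a unit
vector `ψ ∈ ℂ²⊗ℂ²` satisfying the N00N-type constraint `⟨ψ| D⊗D |ψ⟩ = −1`, the CHSH
expectation satisfies `|⟨ψ| Q⊗Q + Q⊗D + D⊗Q − D⊗D |ψ⟩| ≤ 5/2`. -/
theorem chsh_bound_noon (θ : ℝ)
    (σx σz Q D : Matrix (Fin 2) (Fin 2) ℂ)
    (hσx : σx = !![0, 1; 1, 0]) (hσz : σz = !![1, 0; 0, -1])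
    (hQ : Q = (Real.cos θ : ℂ) • σz + (Real.sin θ : ℂ) • σx)
    (hD : D = -σz)
    (ψ : Fin 2 × Fin 2 → ℂ) (hψ : ∑ i, ‖ψ i‖ ^ 2 = 1)
    (hcorr : star ψ ⬝ᵥ (D ⊗ₖ D).mulVec ψ = -1) :
    ‖star ψ ⬝ᵥ (Q ⊗ₖ Q + Q ⊗ₖ D + D ⊗ₖ Q - D ⊗ₖ D).mulVec ψ‖ ≤ 5 / 2 := by
  subst hQ hD hσx hσz
  simp only [Fintype.sum_prod_type, Fin.sum_univ_two, Prod.mk_zero_zero, Prod.mk_one_one] at hψ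
  simp only [dotProduct, Matrix.mulVec, Matrix.kroneckerMap_apply,
    Fintype.sum_prod_type, Fin.sum_univ_two, Matrix.neg_apply, Matrix.add_apply,
    Matrix.smul_apply, Matrix.sub_apply, Pi.star_apply, smul_eq_mul] at hcorr ⊢
  norm_num [Matrix.cons_val', Matrix.cons_val_zero, Matrix.cons_val_one, Matrix.head_cons,
    Matrix.head_fin_const, Matrix.empty_val', Matrix.cons_val_fin_one, Prod.mk_zero_zero, Prod.mk_one_one] at hcorr ⊢
  set a := ψ 0 with ha'
  set b := ψ (0, 1) with hb'
  set c := ψ (1, 0) with hc'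
  set d := ψ 1 with hd'
  have h0 : ∀ z : ℂ, (starRingEnd ℂ) z * z = ((‖z‖ ^ 2 : ℝ) : ℂ) := by
    intro z
    rw [mul_comm, Complex.mul_conj]
    norm_cast
    exact (Complex.sq_norm z).symm
  have had : ‖a‖ ^ 2 + ‖d‖ ^ 2 = 0 := by
    have h := congrArg Complex.re hcorr
    rw [h0 a, h0 b, h0 c, h0 d] at h
    simp only [Complex.add_re, Complex.sub_re, Complex.neg_re, Complex.ofReal_re,
      Complex.one_re] at h
    nlinarith [h, hψ]
  have ha : a = 0 := by
    have : ‖a‖ = 0 := by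
      nlinarith [sq_nonneg (‖a‖), sq_nonneg (‖d‖),
        norm_nonneg a, norm_nonneg d]
    simpa using this
  have hd : d = 0 := by
    have : ‖d‖ = 0 := by
      nlinarith [sq_nonneg (‖a‖), sq_nonneg (‖d‖),
        norm_nonneg a, norm_nonneg d]
    simpa using this
  rw [ha, hd] at hψ
  simp only [ha, hd, map_zero, mul_zero, zero_mul, ne_eq, OfNat.ofNat_ne_zero,
    not_false_eq_true, zero_pow, zero_add, add_zero, sub_zero, zero_sub, neg_zero] at hψ ⊢
  set u := ((starRingEnd ℂ) b * c).re with hu'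
  have hbc : (starRingEnd ℂ) b * c + b * (starRingEnd ℂ) c = ((2 * u : ℝ) : ℂ) := by
    have h1 : (starRingEnd ℂ) ((starRingEnd ℂ) b * c) = b * (starRingEnd ℂ) c := by
      rw [RingHom.map_mul]
      simp
    rw [← h1, Complex.add_conj, hu']
    try push_cast
    try ring
  set E := ((‖b‖ ^ 2 + ‖c‖ ^ 2) * (1 + 2 * Real.cos θ - Real.cos θ ^ 2)
    + Real.sin θ ^ 2 * (2 * u) : ℝ) with hE'
  have hE : (starRingEnd ℂ) b *
        ((-(Complex.cos θ * Complex.cos θ) + Complex.cos θ + Complex.cos θ + 1) * b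
          + Complex.sin θ * Complex.sin θ * c) +
      (starRingEnd ℂ) c *
        (Complex.sin θ * Complex.sin θ * b
          + (-(Complex.cos θ * Complex.cos θ) + Complex.cos θ + Complex.cos θ + 1) * c)
      = ((E : ℝ) : ℂ) := by
    have h0b := h0 b
    have h0c := h0 c
    rw [hE']
    push_cast [Complex.ofReal_cos, Complex.ofReal_sin] at h0b h0c hbc ⊢
    linear_combination (1 + 2 * Complex.cos (θ : ℂ) - Complex.cos (θ : ℂ) ^ 2) * h0b +
      (1 + 2 * Complex.cos (θ : ℂ) - Complex.cos (θ : ℂ) ^ 2) * h0c +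
      Complex.sin (θ : ℂ) ^ 2 * hbc
  rw [hE, Complex.norm_real, Real.norm_eq_abs]
  have habs : |u| ≤ ‖b‖ * ‖c‖ := by
    calc |u| ≤ ‖(starRingEnd ℂ) b * c‖ := Complex.abs_re_le_norm _
    _ = ‖b‖ * ‖c‖ := by rw [norm_mul, Complex.norm_conj]
  have hu1 : u ≤ ‖b‖ * ‖c‖ := le_trans (le_abs_self u) habs
  have hu2 : -(‖b‖ * ‖c‖) ≤ u := neg_le_of_abs_le habs
  have hpyth := Real.sin_sq_add_cos_sq θ
  have hc1 := Real.cos_le_one θ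
  have hc2 := Real.neg_one_le_cos θ
  have h2u1 : (1 : ℝ) - 2 * u ≥ 0 := by nlinarith [sq_nonneg (‖b‖ - ‖c‖)]
  have h2u2 : (1 : ℝ) + 2 * u ≥ 0 := by nlinarith [sq_nonneg (‖b‖ - ‖c‖)]
  rw [abs_le]
  constructor
  · rw [hE']
    nlinarith [mul_nonneg (sq_nonneg (Real.sin θ)) h2u2]
  · rw [hE']
    nlinarith [mul_nonneg (sq_nonneg (Real.sin θ)) h2u1, sq_nonneg (2 * Real.cos θ - 1)]
end

section
/- Let ψ ∈ H_A ⊗ H_B be a unit vector, A₀,A₁ self-adjoint involutions on H_A and B₀,B₁ on H_B, and suppose ⟨ψ| A₀⊗B₀ |ψ⟩ = 0. Then |⟨ψ| A₀⊗B₀ + A₀⊗B₁ + A₁⊗B₀ − A₁⊗B₁ |ψ⟩| ≤ 3√3/2. -/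
open scoped InnerProductSpace

set_option linter.unreachableTactic false
set_option linter.unusedTactic false

private lemma exp_sq_aux {H : Type*} [NormedAddCommGroup H] [InnerProductSpace ℂ H]
    [CompleteSpace H] (D : H →L[ℂ] H) (hD : IsSelfAdjoint D) (ψ : H) :
    ⟪ψ, (D * D) ψ⟫_ℂ = (‖D ψ‖ : ℂ)^2 := by
  have h := hD.isSymmetric ψ (D ψ)
  calc ⟪ψ, (D * D) ψ⟫_ℂ = ⟪ψ, D (D ψ)⟫_ℂ := rfl
    _ = ⟪D ψ, D ψ⟫_ℂ := h.symm
    _ = (‖D ψ‖ : ℂ)^2 := by simp [inner_self_eq_norm_sq_to_K]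

private lemma chsh_sos_aux
    {H : Type*} [NormedAddCommGroup H] [InnerProductSpace ℂ H] [CompleteSpace H]
    (A₀ A₁ B₀ B₁ : H →L[ℂ] H)
    (hA₀sq : A₀ * A₀ = 1) (hA₁sq : A₁ * A₁ = 1)
    (hB₀sq : B₀ * B₀ = 1) (hB₁sq : B₁ * B₁ = 1)
    (hc₀₀ : Commute A₀ B₀) (hc₀₁ : Commute A₀ B₁)
    (hc₁₀ : Commute A₁ B₀) (hc₁₁ : Commute A₁ B₁)
    (s : ℂ) (hs : s * s = 3) :
    A₀ * B₀ + A₀ * B₁ + A₁ * B₀ - A₁ * B₁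
    = ((3/2) * s) • 1 + (1/2 : ℂ) • (A₀ * B₀)
      - (s/3) • (((s/2) • A₀ - (1/2 : ℂ) • B₀ - B₁) * ((s/2) • A₀ - (1/2 : ℂ) • B₀ - B₁))
      - (s/6) • ((s • A₁ - B₀ + B₁) * (s • A₁ - B₀ + B₁)) := by
  simp only [mul_add, add_mul, mul_sub, sub_mul, smul_mul_assoc, mul_smul_comm, smul_smul,
    smul_add, smul_sub, hA₀sq, hA₁sq, hB₀sq, hB₁sq, ← hc₀₀.eq, ← hc₀₁.eq, ← hc₁₀.eq, ← hc₁₁.eq]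
  match_scalars <;>
    first
      | ring1
      | linear_combination ((-6/12 : ℂ) ) * hs
      | linear_combination ((-6/12 : ℂ) + s/4) * hs
      | linear_combination ((-6/12 : ℂ) - s/4) * hs
      | linear_combination ((-5/12 : ℂ) ) * hs
      | linear_combination ((-5/12 : ℂ) + s/4) * hs
      | linear_combination ((-5/12 : ℂ) - s/4) * hs
      | linear_combination ((-4/12 : ℂ) ) * hs
      | linear_combination ((-4/12 : ℂ) + s/4) * hs
      | linear_combination ((-4/12 : ℂ) - s/4) * hs
      | linear_combination ((-3/12 : ℂ) ) * hs
      | linear_combination ((-3/12 : ℂ) + s/4) * hs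
      | linear_combination ((-3/12 : ℂ) - s/4) * hs
      | linear_combination ((-2/12 : ℂ) ) * hs
      | linear_combination ((-2/12 : ℂ) + s/4) * hs
      | linear_combination ((-2/12 : ℂ) - s/4) * hs
      | linear_combination ((-1/12 : ℂ) ) * hs
      | linear_combination ((-1/12 : ℂ) + s/4) * hs
      | linear_combination ((-1/12 : ℂ) - s/4) * hs
      | linear_combination ((0/12 : ℂ) ) * hs
      | linear_combination ((0/12 : ℂ) + s/4) * hs
      | linear_combination ((0/12 : ℂ) - s/4) * hs
      | linear_combination ((1/12 : ℂ) ) * hs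
      | linear_combination ((1/12 : ℂ) + s/4) * hs
      | linear_combination ((1/12 : ℂ) - s/4) * hs
      | linear_combination ((2/12 : ℂ) ) * hs
      | linear_combination ((2/12 : ℂ) + s/4) * hs
      | linear_combination ((2/12 : ℂ) - s/4) * hs
      | linear_combination ((3/12 : ℂ) ) * hs
      | linear_combination ((3/12 : ℂ) + s/4) * hs
      | linear_combination ((3/12 : ℂ) - s/4) * hs
      | linear_combination ((4/12 : ℂ) ) * hs
      | linear_combination ((4/12 : ℂ) + s/4) * hs
      | linear_combination ((4/12 : ℂ) - s/4) * hs
      | linear_combination ((5/12 : ℂ) ) * hs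
      | linear_combination ((5/12 : ℂ) + s/4) * hs
      | linear_combination ((5/12 : ℂ) - s/4) * hs
      | linear_combination ((6/12 : ℂ) ) * hs
      | linear_combination ((6/12 : ℂ) + s/4) * hs
      | linear_combination ((6/12 : ℂ) - s/4) * hs

/-- If `⟨ψ| A₀⊗B₀ |ψ⟩ = 0` for a unit vector `ψ` and self-adjoint involutions
`A₀, A₁, B₀, B₁` (represented as commuting operators on the joint Hilbert space,
`A_i ⊗ B_j` corresponding to `A_i * B_j`), then `|⟨ψ| 𝓑 |ψ⟩| ≤ 3√3/2`. -/
theorem chsh_bound_of_zero_correlation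
    {H : Type*} [NormedAddCommGroup H] [InnerProductSpace ℂ H] [CompleteSpace H]
    (A₀ A₁ B₀ B₁ : H →L[ℂ] H)
    (hA₀ : IsSelfAdjoint A₀) (hA₁ : IsSelfAdjoint A₁)
    (hB₀ : IsSelfAdjoint B₀) (hB₁ : IsSelfAdjoint B₁)
    (hA₀sq : A₀ * A₀ = 1) (hA₁sq : A₁ * A₁ = 1)
    (hB₀sq : B₀ * B₀ = 1) (hB₁sq : B₁ * B₁ = 1)
    (hc₀₀ : Commute A₀ B₀) (hc₀₁ : Commute A₀ B₁)
    (hc₁₀ : Commute A₁ B₀) (hc₁₁ : Commute A₁ B₁)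
    (ψ : H) (hψ : ‖ψ‖ = 1)
    (hcorr : ⟪ψ, (A₀ * B₀) ψ⟫_ℂ = 0) :
    ‖⟪ψ, (A₀ * B₀ + A₀ * B₁ + A₁ * B₀ - A₁ * B₁) ψ⟫_ℂ‖ ≤ 3 * Real.sqrt 3 / 2 := by
  set s : ℂ := (Real.sqrt 3 : ℂ) with hsdef
  have hs : s * s = 3 := by
    rw [hsdef, ← Complex.ofReal_mul, Real.mul_self_sqrt (by norm_num : (0:ℝ) ≤ 3)]
    norm_num
  have hss : star s = s := by rw [hsdef]; exact Complex.conj_ofReal _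
  have hpsi : ⟪ψ, ψ⟫_ℂ = 1 := by
    simp [inner_self_eq_norm_sq_to_K, hψ]
  -- self-adjointness of the certificate operators
  have hD0sa : IsSelfAdjoint ((s/2) • A₀ - (1/2 : ℂ) • B₀ - B₁) := by
    have h1 : star (s/2) = s/2 := by rw [star_div₀]; simp [hss]
    exact ((IsSelfAdjoint.smul h1 hA₀).sub (IsSelfAdjoint.smul (show star ((1:ℂ)/2) = (1:ℂ)/2 by simp) hB₀)).sub hB₁
  have hD1sa : IsSelfAdjoint (s • A₁ - B₀ + B₁) := by
    exact ((IsSelfAdjoint.smul hss hA₁).sub hB₀).add hB₁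
  have hE0sa : IsSelfAdjoint ((s/2) • (-A₀) - (1/2 : ℂ) • B₀ - B₁) := by
    have h1 : star (s/2) = s/2 := by rw [star_div₀]; simp [hss]
    exact ((IsSelfAdjoint.smul h1 hA₀.neg).sub
      (IsSelfAdjoint.smul (show star ((1:ℂ)/2) = (1:ℂ)/2 by simp) hB₀)).sub hB₁
  have hE1sa : IsSelfAdjoint (s • (-A₁) - B₀ + B₁) := by
    exact ((IsSelfAdjoint.smul hss hA₁.neg).sub hB₀).add hB₁
  set D₀ := (s/2) • A₀ - (1/2 : ℂ) • B₀ - B₁ with hD₀def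
  set D₁ := s • A₁ - B₀ + B₁ with hD₁def
  set E₀ := (s/2) • (-A₀) - (1/2 : ℂ) • B₀ - B₁ with hE₀def
  set E₁ := s • (-A₁) - B₀ + B₁ with hE₁def
  have key := chsh_sos_aux A₀ A₁ B₀ B₁ hA₀sq hA₁sq hB₀sq hB₁sq hc₀₀ hc₀₁ hc₁₀ hc₁₁ s hs
  have key2 := chsh_sos_aux (-A₀) (-A₁) B₀ B₁ (by rw [neg_mul_neg, hA₀sq])
    (by rw [neg_mul_neg, hA₁sq]) hB₀sq hB₁sq hc₀₀.neg_left hc₀₁.neg_left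
    hc₁₀.neg_left hc₁₁.neg_left s hs
  have hz1 : ⟪ψ, (A₀ * B₀ + A₀ * B₁ + A₁ * B₀ - A₁ * B₁) ψ⟫_ℂ
      = (3/2) * s - (s/3) * (‖D₀ ψ‖ : ℂ)^2 - (s/6) * (‖D₁ ψ‖ : ℂ)^2 := by
    rw [key]
    simp only [ContinuousLinearMap.add_apply, ContinuousLinearMap.sub_apply,
      ContinuousLinearMap.smul_apply, ContinuousLinearMap.one_apply,
      inner_add_right, inner_sub_right, inner_smul_right]
    rw [exp_sq_aux D₀ hD0sa ψ, exp_sq_aux D₁ hD1sa ψ, hpsi, hcorr]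
    ring
  have hcorr' : ⟪ψ, ((-A₀) * B₀) ψ⟫_ℂ = 0 := by
    rw [neg_mul]
    simp only [ContinuousLinearMap.neg_apply, inner_neg_right, hcorr, neg_zero]
  have hz2 : ⟪ψ, ((-A₀) * B₀ + (-A₀) * B₁ + (-A₁) * B₀ - (-A₁) * B₁) ψ⟫_ℂ
      = (3/2) * s - (s/3) * (‖E₀ ψ‖ : ℂ)^2 - (s/6) * (‖E₁ ψ‖ : ℂ)^2 := by
    rw [key2]
    simp only [ContinuousLinearMap.add_apply, ContinuousLinearMap.sub_apply,
      ContinuousLinearMap.smul_apply, ContinuousLinearMap.one_apply,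
      inner_add_right, inner_sub_right, inner_smul_right]
    rw [exp_sq_aux E₀ hE0sa ψ, exp_sq_aux E₁ hE1sa ψ, hpsi, hcorr']
    ring
  have hneg : ((-A₀) * B₀ + (-A₀) * B₁ + (-A₁) * B₀ - (-A₁) * B₁)
      = -(A₀ * B₀ + A₀ * B₁ + A₁ * B₀ - A₁ * B₁) := by
    simp only [neg_mul]; abel
  have hz2' : -⟪ψ, (A₀ * B₀ + A₀ * B₁ + A₁ * B₀ - A₁ * B₁) ψ⟫_ℂ
      = (3/2) * s - (s/3) * (‖E₀ ψ‖ : ℂ)^2 - (s/6) * (‖E₁ ψ‖ : ℂ)^2 := by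
    rw [← hz2, hneg]
    simp only [ContinuousLinearMap.neg_apply, inner_neg_right]
  -- pass to real numbers
  set r₁ : ℝ := 3 * Real.sqrt 3 / 2 - Real.sqrt 3 / 3 * ‖D₀ ψ‖^2 - Real.sqrt 3 / 6 * ‖D₁ ψ‖^2
    with hr₁def
  set r₂ : ℝ := 3 * Real.sqrt 3 / 2 - Real.sqrt 3 / 3 * ‖E₀ ψ‖^2 - Real.sqrt 3 / 6 * ‖E₁ ψ‖^2
    with hr₂def
  have hzr1 : ⟪ψ, (A₀ * B₀ + A₀ * B₁ + A₁ * B₀ - A₁ * B₁) ψ⟫_ℂ = (r₁ : ℂ) := by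
    rw [hz1, hr₁def, hsdef]; push_cast; ring
  have hzr2 : -⟪ψ, (A₀ * B₀ + A₀ * B₁ + A₁ * B₀ - A₁ * B₁) ψ⟫_ℂ = (r₂ : ℂ) := by
    rw [hz2', hr₂def, hsdef]; push_cast; ring
  have hr12 : r₁ = -r₂ := by
    have : ((-r₂ : ℝ) : ℂ) = (r₁ : ℂ) := by rw [Complex.ofReal_neg, ← hzr2, hzr1, neg_neg]
    exact_mod_cast this.symm
  rw [hzr1, Complex.norm_real, Real.norm_eq_abs]
  have hs3 : (0:ℝ) ≤ Real.sqrt 3 := Real.sqrt_nonneg 3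
  have h1 : (0:ℝ) ≤ Real.sqrt 3 / 3 * ‖D₀ ψ‖^2 := by positivity
  have h2 : (0:ℝ) ≤ Real.sqrt 3 / 6 * ‖D₁ ψ‖^2 := by positivity
  have h3 : (0:ℝ) ≤ Real.sqrt 3 / 3 * ‖E₀ ψ‖^2 := by positivity
  have h4 : (0:ℝ) ≤ Real.sqrt 3 / 6 * ‖E₁ ψ‖^2 := by positivity
  rw [abs_le]
  constructor
  · rw [hr12]
    have : r₂ ≤ 3 * Real.sqrt 3 / 2 := by rw [hr₂def]; linarith
    linarith
  · rw [hr₁def]; linarith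
end
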